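/- Let κ be a regular cardinal, μ a (κ,κ⁺)-cardinal, and m the μ-coloring. For every limit ordinal δ with 0 < δ < κ⁺ and every ε with δ < ε < κ⁺, there exists ζ < δ such that m(ξ,ε) ≥ m(ξ,δ) for all ξ with ζ ≤ ξ < δ. -/

import Mathlib

open Set Cardinal Ordinal

noncomputable section

/-- Lower a (small) ordinal of `Ordinal.{1}` to `Ordinal.{0}` (the inverse of `Ordinal.lift`
on its range). -/
noncomputable def olower (o : Ordinal.{1}) : Ordinal.{0} :=
  sInf {a : Ordinal.{0} | Ordinal.lift.{1} a = o}

/-- The order type of a set of ordinals. -/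
noncomputable def otp (A : Set Ordinal.{0}) : Ordinal.{0} :=
  olower (Ordinal.type (Subrel ((· < ·) : Ordinal → Ordinal → Prop) (· ∈ A)))

/-- The canonical order-preserving transfer map from a set of ordinals `X` to a set of
ordinals `Y` of the same order type: an element `a ∈ X` is sent to the unique element of `Y`
occupying the same position. -/
noncomputable def omap (X Y : Set Ordinal) (a : Ordinal) : Ordinal :=
  sInf {b | b ∈ Y ∧ otp (Y ∩ Set.Iio b) = otp (X ∩ Set.Iio a)}

/-- `IsStar X₁ X₂ X` says `X = X₁ * X₂`: `X₁` and `X₂` have the same order type,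
`X = X₁ ∪ X₂`, and `X₁ ∩ X₂ < X₁ \ X₂ < X₂ \ X₁` elementwise. -/
def IsStar (X₁ X₂ X : Set Ordinal) : Prop :=
  otp X₁ = otp X₂ ∧ X = X₁ ∪ X₂ ∧
  (∀ a ∈ X₁ ∩ X₂, ∀ b ∈ X₁ \ X₂, a < b) ∧
  (∀ b ∈ X₁ \ X₂, ∀ c ∈ X₂ \ X₁, b < c)

set_option linter.deprecated false in
/-- A `(κ,κ⁺)`-cardinal (a neat simplified `(κ,1)`-morass presented as a family of sets):
a family `μ ⊆ ℘_κ(κ⁺)` which is well-founded under strict inclusion, locally small,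
homogeneous, directed, locally almost directed, covers `κ⁺` and is neat. -/
structure TwoCardinal (κ : Cardinal.{0}) where
  mu : Set (Set Ordinal)
  mem_sub : ∀ X ∈ mu, X ⊆ Set.Iio (Order.succ κ).ord
  mem_small : ∀ X ∈ mu, (otp X).card < κ
  wf : WellFounded fun X Y : mu => (X : Set Ordinal) ⊂ (Y : Set Ordinal)
  locSmall : ∀ X : mu,
    #{Z : mu // (Z : Set Ordinal) ⊂ (X : Set Ordinal)} < Cardinal.lift.{1} κ
  homog : ∀ X Y : mu, (wf.apply X).rank = (wf.apply Y).rank →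
    otp (X : Set Ordinal) = otp (Y : Set Ordinal) ∧
    {Z | Z ∈ mu ∧ Z ⊂ (Y : Set Ordinal)} =
      (fun Z => omap (X : Set Ordinal) (Y : Set Ordinal) '' Z) ''
        {Z | Z ∈ mu ∧ Z ⊂ (X : Set Ordinal)}
  directed : ∀ X ∈ mu, ∀ Y ∈ mu, ∃ Z ∈ mu, X ⊆ Z ∧ Y ⊆ Z
  locAlmostDirected : ∀ X : mu,
    (∀ Z₁ ∈ mu, ∀ Z₂ ∈ mu, Z₁ ⊂ (X : Set Ordinal) → Z₂ ⊂ (X : Set Ordinal) →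
      ∃ Z ∈ mu, Z ⊂ (X : Set Ordinal) ∧ Z₁ ⊆ Z ∧ Z₂ ⊆ Z) ∨
    (∃ X₁ X₂ : mu, (wf.apply X₁).rank = (wf.apply X₂).rank ∧
      IsStar (X₁ : Set Ordinal) (X₂ : Set Ordinal) (X : Set Ordinal) ∧
      {Z | Z ∈ mu ∧ Z ⊂ (X : Set Ordinal)} =
        {Z | Z ∈ mu ∧ Z ⊂ (X₁ : Set Ordinal)} ∪ {Z | Z ∈ mu ∧ Z ⊂ (X₂ : Set Ordinal)} ∪
          {(X₁ : Set Ordinal), (X₂ : Set Ordinal)})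
  covers : ⋃₀ mu = Set.Iio (Order.succ κ).ord
  neat : ∀ X : mu, (wf.apply X).rank ≠ 0 →
    (X : Set Ordinal) = ⋃₀ {Z | Z ∈ mu ∧ Z ⊂ (X : Set Ordinal)}

set_option linter.deprecated false in
noncomputable def WellFounded.rank {α : Type*} {r : α → α → Prop} (hwf : WellFounded r)
    (a : α) : Ordinal := (hwf.apply a).rank

theorem WellFounded.rank_eq {α : Type*} {r : α → α → Prop} (hwf : WellFounded r) (a : α) :
    hwf.rank a = ⨆ b : {b // r b a}, Order.succ (hwf.rank b.1) := by
  rw [WellFounded.rank, Acc.rank_eq]; rfl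

theorem WellFounded.rank_lt_of_rel {α : Type*} {r : α → α → Prop} (hwf : WellFounded r)
    {a b : α} (h : r a b) : hwf.rank a < hwf.rank b :=
  Acc.rank_lt_of_rel _ h

namespace TwoCardinal

variable {κ : Cardinal} (M : TwoCardinal κ)

set_option linter.deprecated false in
/-- The rank of an element of `μ` in the well-founded order `(μ, ⊂)`. -/
noncomputable def rank (X : M.mu) : Ordinal := olower ((M.wf.apply X).rank)

/-- The height of the well-founded order `(μ, ⊂)`. -/
noncomputable def ht : Ordinal := sSup (Set.range fun X : M.mu => M.rank X + 1)

/-- The term `μ_ξ(α)` of the μ-sequence at `α`: equal to `X ∩ α` for any `X ∈ μ` of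
rank `ξ` containing `α` (this is independent of the choice of `X`). -/
noncomputable def seq (α ξ : Ordinal) : Set Ordinal :=
  ⋃₀ {S | ∃ X : M.mu, M.rank X = ξ ∧ α ∈ (X : Set Ordinal) ∧
    S = (X : Set Ordinal) ∩ Set.Iio α}

/-- The μ-coloring `m(α,β) = min{rank X : α, β ∈ X ∈ μ}`. -/
noncomputable def mcol (a b : Ordinal) : Ordinal :=
  sInf {ξ | ∃ X : M.mu, M.rank X = ξ ∧ a ∈ (X : Set Ordinal) ∧ b ∈ (X : Set Ordinal)}

section Otp

theorem lift_olower {o : Ordinal.{1}} (h : ∃ a : Ordinal.{0}, Ordinal.lift.{1} a = o) :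
    Ordinal.lift.{1} (olower o) = o :=
  csInf_mem h

theorem olower_lift (a : Ordinal.{0}) : olower (Ordinal.lift.{1} a) = a := by
  have h : {b : Ordinal.{0} | Ordinal.lift.{1} b = Ordinal.lift.{1} a} = {a} := by
    ext b; simp [Ordinal.lift_inj]
  rw [olower, h, csInf_singleton]

theorem small_type_lt_univ {α : Type 1} (r : α → α → Prop) [IsWellOrder α r] [Small.{0} α] :
    Ordinal.type r < Ordinal.univ.{0,1} := by
  rw [← Cardinal.ord_univ, Cardinal.lt_ord, Ordinal.card_type]
  have := Cardinal.small_iff_lift_mk_lt_univ.{1,0}.mp ‹Small.{0} α›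
  simpa using this

theorem lift_otp (A : Set Ordinal.{0}) [Small.{0} A] :
    Ordinal.lift.{1} (otp A) =
      Ordinal.type (Subrel ((· < ·) : Ordinal → Ordinal → Prop) (· ∈ A)) := by
  apply lift_olower
  set o := Ordinal.type (Subrel ((· < ·) : Ordinal → Ordinal → Prop) (· ∈ A)) with ho
  have hsm : o.card < Cardinal.univ.{0,1} := by
    rw [ho, Ordinal.card_type]
    have := Cardinal.small_iff_lift_mk_lt_univ.{1,0}.mp ‹Small.{0} ↑A›
    simpa using this
  obtain ⟨c, hc⟩ := Cardinal.lt_univ.1 hsm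
  have hlt : o ≤ Ordinal.lift.{1} (Order.succ c).ord := by
    rw [Cardinal.lift_ord, Cardinal.lift_succ]
    exact le_of_lt (Cardinal.lt_ord.2 (hc ▸ Order.lt_succ _))
  obtain ⟨a, ha⟩ := Ordinal.mem_range_lift_of_le hlt
  exact ⟨a, ha⟩

end Otp

section Pos

theorem small_inter_Iio {A : Set Ordinal.{0}} [Small.{0} A] (a : Ordinal) :
    Small.{0} (A ∩ Set.Iio a : Set Ordinal) :=
  small_subset inter_subset_left

theorem otp_pos_lt {A : Set Ordinal.{0}} [Small.{0} A] {a b : Ordinal}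
    (ha : a ∈ A) (hab : a < b) :
    otp (A ∩ Set.Iio a) < otp (A ∩ Set.Iio b) := by
  haveI := small_inter_Iio (A := A) a
  haveI := small_inter_Iio (A := A) b
  rw [← Ordinal.lift_lt.{1}, lift_otp, lift_otp]
  refine PrincipalSeg.ordinal_type_lt
    ⟨⟨⟨fun x => ⟨x.1, x.2.1, lt_trans x.2.2 hab⟩, ?_⟩, ?_⟩, ⟨a, ha, hab⟩, ?_⟩
  · intro x y h
    exact Subtype.ext (Subtype.mk_eq_mk.mp h)
  · intro x y
    exact Iff.rfl
  · rintro ⟨z, hzA, hzb⟩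
    constructor
    · rintro ⟨⟨w, hwA, hwa⟩, hw⟩
      have : w = z := congrArg Subtype.val hw
      subst this
      exact hwa
    · intro hz
      exact ⟨⟨z, hzA, hz⟩, rfl⟩

theorem otp_pos_injOn {A : Set Ordinal.{0}} [Small.{0} A] {a b : Ordinal}
    (ha : a ∈ A) (hb : b ∈ A)
    (h : otp (A ∩ Set.Iio a) = otp (A ∩ Set.Iio b)) : a = b := by
  rcases lt_trichotomy a b with hlt | he | hgt
  · exact absurd h (ne_of_lt (otp_pos_lt ha hlt))
  · exact he
  · exact absurd h.symm (ne_of_lt (otp_pos_lt hb hgt))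

end Pos

section Match

theorem otp_match {A B : Set Ordinal.{0}} [Small.{0} A] [Small.{0} B]
    (h : otp A = otp B) {a : Ordinal} (ha : a ∈ A) :
    ∃ b ∈ B, otp (B ∩ Set.Iio b) = otp (A ∩ Set.Iio a) := by
  have htype : Ordinal.type (Subrel ((· < ·) : Ordinal → Ordinal → Prop) (· ∈ A))
      = Ordinal.type (Subrel ((· < ·) : Ordinal → Ordinal → Prop) (· ∈ B)) := by
    rw [← lift_otp, ← lift_otp, h]
  obtain ⟨e⟩ := Ordinal.type_eq.1 htype
  set b : ↥B := e ⟨a, ha⟩ with hbdef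
  have key : ∀ x : ↥A, x.1 < a ↔ (e x).1 < b.1 := by
    intro x
    exact (e.map_rel_iff (a := x) (b := ⟨a, ha⟩)).symm
  refine ⟨b.1, b.2, ?_⟩
  haveI := small_inter_Iio (A := A) a
  haveI := small_inter_Iio (A := B) b.1
  rw [← Ordinal.lift_inj.{1}, lift_otp, lift_otp]
  refine (RelIso.ordinal_type_eq ?_)
  refine ⟨Equiv.mk
    (fun y => ⟨(e.symm ⟨y.1, y.2.1⟩).1, (e.symm ⟨y.1, y.2.1⟩).2, ?_⟩)
    (fun x => ⟨(e ⟨x.1, x.2.1⟩).1, (e ⟨x.1, x.2.1⟩).2, ?_⟩)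
    ?_ ?_, ?_⟩
  · show (e.symm ⟨y.1, y.2.1⟩).1 < a
    rw [key (e.symm ⟨y.1, y.2.1⟩), e.apply_symm_apply]
    exact y.2.2
  · exact (key ⟨x.1, x.2.1⟩).1 x.2.2
  · intro y
    apply Subtype.ext
    show (e (e.symm ⟨y.1, y.2.1⟩)).1 = y.1
    rw [e.apply_symm_apply]
  · intro x
    apply Subtype.ext
    show (e.symm (e ⟨x.1, x.2.1⟩)).1 = x.1
    rw [e.symm_apply_apply]
  · intro y y'
    show (e.symm ⟨y.1, y.2.1⟩).1 < (e.symm ⟨y'.1, y'.2.1⟩).1 ↔ y.1 < y'.1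
    have := e.symm.map_rel_iff (a := (⟨y.1, y.2.1⟩ : ↥B)) (b := (⟨y'.1, y'.2.1⟩ : ↥B))
    exact this

end Match

section OmapLemmas

theorem omap_spec {A B : Set Ordinal.{0}} [Small.{0} A] [Small.{0} B]
    (h : otp A = otp B) {a : Ordinal} (ha : a ∈ A) :
    omap A B a ∈ B ∧ otp (B ∩ Set.Iio (omap A B a)) = otp (A ∩ Set.Iio a) := by
  have hne : {b | b ∈ B ∧ otp (B ∩ Set.Iio b) = otp (A ∩ Set.Iio a)}.Nonempty := by
    obtain ⟨b, hb, he⟩ := otp_match h ha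
    exact ⟨b, hb, he⟩
  exact csInf_mem hne

theorem omap_mem {A B : Set Ordinal.{0}} [Small.{0} A] [Small.{0} B]
    (h : otp A = otp B) {a : Ordinal} (ha : a ∈ A) : omap A B a ∈ B :=
  (omap_spec h ha).1

theorem omap_inj {A B : Set Ordinal.{0}} [Small.{0} A] [Small.{0} B]
    (h : otp A = otp B) {a a' : Ordinal} (ha : a ∈ A) (ha' : a' ∈ A)
    (he : omap A B a = omap A B a') : a = a' := by
  apply otp_pos_injOn ha ha'
  have h1 := (omap_spec h ha).2
  have h2 := (omap_spec h ha').2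
  rw [← h1, ← h2, he]

theorem omap_fix {A B : Set Ordinal.{0}} [Small.{0} A] [Small.{0} B]
    (h : otp A = otp B) {c : Ordinal} (hcA : c ∈ A) (hcB : c ∈ B)
    (htr : A ∩ Set.Iio c = B ∩ Set.Iio c) : omap A B c = c := by
  have hset : {b | b ∈ B ∧ otp (B ∩ Set.Iio b) = otp (A ∩ Set.Iio c)} = {c} := by
    ext b
    constructor
    · rintro ⟨hbB, hb⟩
      exact otp_pos_injOn hbB hcB (hb.trans (by rw [htr]))
    · rintro rfl
      exact ⟨hcB, by rw [htr]⟩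
  rw [omap, hset, csInf_singleton]

end OmapLemmas

section RankLemmas
set_option linter.deprecated false
set_option linter.unusedVariables false

theorem wrank_lt {X Y : M.mu} (h : (X : Set Ordinal) ⊂ (Y : Set Ordinal)) :
    M.wf.rank X < M.wf.rank Y :=
  M.wf.rank_lt_of_rel h

theorem wrank_le {X Y : M.mu} (h : (X : Set Ordinal) ⊆ (Y : Set Ordinal)) :
    M.wf.rank X ≤ M.wf.rank Y := by
  rcases eq_or_ne (X : Set Ordinal) (Y : Set Ordinal) with he | hne
  · rw [Subtype.ext he]
  · exact le_of_lt (M.wrank_lt (ssubset_of_subset_of_ne h hne))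

theorem eq_of_subset_of_wrank_le {X Y : M.mu} (h : (X : Set Ordinal) ⊆ (Y : Set Ordinal))
    (hr : M.wf.rank Y ≤ M.wf.rank X) : X = Y := by
  by_contra hne
  exact absurd (M.wrank_lt (ssubset_of_subset_of_ne h (fun hs => hne (Subtype.ext hs))))
    (not_lt.2 hr)

theorem small_ssubsets (X : M.mu) :
    Small.{0} {Z : M.mu // (Z : Set Ordinal) ⊂ (X : Set Ordinal)} := by
  rw [Cardinal.small_iff_lift_mk_lt_univ]
  have h1 : Cardinal.lift.{1} κ < Cardinal.univ.{0, 1} := Cardinal.lift_lt_univ κ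
  have := lt_trans (M.locSmall X) h1
  simpa [Cardinal.lift_id] using this

theorem wrank_liftable (X : M.mu) :
    ∃ a : Ordinal.{0}, Ordinal.lift.{1} a = M.wf.rank X := by
  refine M.wf.induction
    (C := fun X => ∃ a : Ordinal.{0}, Ordinal.lift.{1} a = M.wf.rank X) X ?_
  clear X
  intro X IH
  haveI := M.small_ssubsets X
  set c : {Z : M.mu // (Z : Set Ordinal) ⊂ (X : Set Ordinal)} → Ordinal.{0} :=
    fun Z => Classical.choose (IH Z.1 Z.2) + 1 with hc
  have hrange : BddAbove (Set.range c) := Ordinal.bddAbove_of_small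
  obtain ⟨a, ha⟩ := hrange
  have hub : M.wf.rank X ≤ Ordinal.lift.{1} a := by
    rw [M.wf.rank_eq]
    apply ciSup_le'
    intro Z
    have hcz := Classical.choose_spec (IH Z.1 Z.2)
    have : Order.succ (M.wf.rank Z.1) = Ordinal.lift.{1} (c Z) := by
      rw [hc, ← hcz]
      simp only [Ordinal.lift_add, Ordinal.lift_one, Order.succ_eq_add_one]
    rw [this]
    exact Ordinal.lift_le.2 (ha (Set.mem_range_self Z))
  exact Ordinal.mem_range_lift_of_le hub

end RankLemmas

section Bridge
set_option linter.deprecated false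

theorem lift_rank (X : M.mu) : Ordinal.lift.{1} (M.rank X) = M.wf.rank X :=
  lift_olower (M.wrank_liftable X)

theorem rank_le_iff {X Y : M.mu} : M.rank X ≤ M.rank Y ↔ M.wf.rank X ≤ M.wf.rank Y := by
  rw [← Ordinal.lift_le.{1}, M.lift_rank, M.lift_rank]

theorem rank_lt_iff {X Y : M.mu} : M.rank X < M.rank Y ↔ M.wf.rank X < M.wf.rank Y := by
  rw [← Ordinal.lift_lt.{1}, M.lift_rank, M.lift_rank]

theorem rank_eq_iff {X Y : M.mu} : M.rank X = M.rank Y ↔ M.wf.rank X = M.wf.rank Y := by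
  rw [← Ordinal.lift_inj.{1}, M.lift_rank, M.lift_rank]

theorem small_mem (X : M.mu) : Small.{0} ((X : Set Ordinal) : Set Ordinal.{0}) :=
  small_subset (M.mem_sub X.1 X.2)

theorem mcol_le {a b : Ordinal} (X : M.mu) (ha : a ∈ (X : Set Ordinal))
    (hb : b ∈ (X : Set Ordinal)) : M.mcol a b ≤ M.rank X :=
  csInf_le (OrderBot.bddBelow _) ⟨X, rfl, ha, hb⟩

theorem mcol_witness {a b : Ordinal} (ha : a < (Order.succ κ).ord)
    (hb : b < (Order.succ κ).ord) :
    ∃ X : M.mu, M.rank X = M.mcol a b ∧ a ∈ (X : Set Ordinal) ∧ b ∈ (X : Set Ordinal) := by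
  have hne : {ξ | ∃ X : M.mu, M.rank X = ξ ∧ a ∈ (X : Set Ordinal) ∧
      b ∈ (X : Set Ordinal)}.Nonempty := by
    have ha' : a ∈ ⋃₀ M.mu := M.covers ▸ ha
    have hb' : b ∈ ⋃₀ M.mu := M.covers ▸ hb
    obtain ⟨Xa, hXa, haX⟩ := ha'
    obtain ⟨Xb, hXb, hbX⟩ := hb'
    obtain ⟨Z, hZ, hXZ, hYZ⟩ := M.directed Xa hXa Xb hXb
    exact ⟨M.rank ⟨Z, hZ⟩, ⟨Z, hZ⟩, rfl, hXZ haX, hYZ hbX⟩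
  exact csInf_mem hne

end Bridge

section Homog
set_option linter.deprecated false

theorem homog_otp {X₁ X₂ : M.mu} (h : M.wf.rank X₁ = M.wf.rank X₂) :
    otp (X₁ : Set Ordinal) = otp (X₂ : Set Ordinal) :=
  (M.homog X₁ X₂ h).1

theorem homog_image_mem {X₁ X₂ : M.mu} (h : M.wf.rank X₁ = M.wf.rank X₂)
    {W : Set Ordinal} (hW : W ∈ M.mu ∧ W ⊂ (X₁ : Set Ordinal)) :
    omap (X₁ : Set Ordinal) (X₂ : Set Ordinal) '' W ∈ M.mu ∧
      omap (X₁ : Set Ordinal) (X₂ : Set Ordinal) '' W ⊂ (X₂ : Set Ordinal) := by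
  have hfam := (M.homog X₁ X₂ h).2
  have hmem : omap (X₁ : Set Ordinal) (X₂ : Set Ordinal) '' W ∈
      {Z | Z ∈ M.mu ∧ Z ⊂ (X₂ : Set Ordinal)} := by
    rw [hfam]
    exact ⟨W, hW, rfl⟩
  exact hmem

theorem homog_surj {X₁ X₂ : M.mu} (h : M.wf.rank X₁ = M.wf.rank X₂)
    {U : Set Ordinal} (hU : U ∈ M.mu ∧ U ⊂ (X₂ : Set Ordinal)) :
    ∃ W, (W ∈ M.mu ∧ W ⊂ (X₁ : Set Ordinal)) ∧
      omap (X₁ : Set Ordinal) (X₂ : Set Ordinal) '' W = U := by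
  have hfam := (M.homog X₁ X₂ h).2
  have : U ∈ (fun Z => omap (X₁ : Set Ordinal) (X₂ : Set Ordinal) '' Z) ''
      {Z | Z ∈ M.mu ∧ Z ⊂ (X₁ : Set Ordinal)} := hfam ▸ hU
  exact this

theorem homog_injOn {X₁ X₂ : M.mu} (h : M.wf.rank X₁ = M.wf.rank X₂) :
    Set.InjOn (omap (X₁ : Set Ordinal) (X₂ : Set Ordinal)) (X₁ : Set Ordinal) := by
  haveI := M.small_mem X₁
  haveI := M.small_mem X₂
  intro a ha b hb he
  exact omap_inj (M.homog_otp h) ha hb he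

theorem homog_rank_image {X₁ X₂ : M.mu} (h : M.wf.rank X₁ = M.wf.rank X₂) :
    ∀ W : M.mu, (W : Set Ordinal) ⊂ (X₁ : Set Ordinal) →
    ∀ W' : M.mu, (W' : Set Ordinal) =
        omap (X₁ : Set Ordinal) (X₂ : Set Ordinal) '' (W : Set Ordinal) →
    M.wf.rank W' = M.wf.rank W := by
  intro W₀₀
  refine M.wf.induction (C := fun W => (W : Set Ordinal) ⊂ (X₁ : Set Ordinal) →
    ∀ W' : M.mu, (W' : Set Ordinal) =
      omap (X₁ : Set Ordinal) (X₂ : Set Ordinal) '' (W : Set Ordinal) →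
    M.wf.rank W' = M.wf.rank W) W₀₀ ?_
  clear W₀₀
  intro W IH hWX W' hW'
  have hinj := M.homog_injOn h
  have hW'X₂ : (W' : Set Ordinal) ⊂ (X₂ : Set Ordinal) := by
    rw [hW']
    exact (M.homog_image_mem h ⟨W.2, hWX⟩).2
  apply le_antisymm
  · rw [M.wf.rank_eq]
    apply ciSup_le'
    rintro ⟨U, hU⟩
    have hUX₂ : (U : Set Ordinal) ⊂ (X₂ : Set Ordinal) := hU.trans hW'X₂
    obtain ⟨W₀set, hW₀, hW₀img⟩ := M.homog_surj h ⟨U.2, hUX₂⟩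
    have hW₀sub : W₀set ⊂ (W : Set Ordinal) := by
      rw [← hinj.image_ssubset_image_iff hW₀.2.subset hWX.subset, hW₀img, ← hW']
      exact hU
    have hrk : M.wf.rank U = M.wf.rank (⟨W₀set, hW₀.1⟩ : M.mu) :=
      IH ⟨W₀set, hW₀.1⟩ hW₀sub hW₀.2 U hW₀img.symm
    rw [M.wf.rank_eq (a := W)]
    refine le_trans ?_ (le_ciSup (Ordinal.bddAbove_range.{1,1} _)
      (⟨⟨W₀set, hW₀.1⟩, hW₀sub⟩ : {Z : M.mu // (Z : Set Ordinal) ⊂ (W : Set Ordinal)}))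
    rw [hrk]
  · rw [M.wf.rank_eq (a := W)]
    apply ciSup_le'
    rintro ⟨W₀, hW₀⟩
    have hW₀X₁ : (W₀ : Set Ordinal) ⊂ (X₁ : Set Ordinal) := hW₀.trans hWX
    have himg := M.homog_image_mem h ⟨W₀.2, hW₀X₁⟩
    set U : M.mu := ⟨omap (X₁ : Set Ordinal) (X₂ : Set Ordinal) '' (W₀ : Set Ordinal),
      himg.1⟩ with hUdef
    have hUsub : (U : Set Ordinal) ⊂ (W' : Set Ordinal) := by
      rw [hW']
      exact (hinj.image_ssubset_image_iff hW₀X₁.subset hWX.subset).2 hW₀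
    have hrk : M.wf.rank U = M.wf.rank W₀ := IH W₀ hW₀ hW₀X₁ U rfl
    rw [M.wf.rank_eq (a := W')]
    refine le_trans ?_ (le_ciSup (Ordinal.bddAbove_range.{1,1} _)
      (⟨U, hUsub⟩ : {Z : M.mu // (Z : Set Ordinal) ⊂ (W' : Set Ordinal)}))
    rw [hrk]

end Homog

section Star
set_option linter.deprecated false

theorem star_proper {V X₁ X₂ : M.mu}
    (hfam : {Z | Z ∈ M.mu ∧ Z ⊂ (V : Set Ordinal)} =
      {Z | Z ∈ M.mu ∧ Z ⊂ (X₁ : Set Ordinal)} ∪ {Z | Z ∈ M.mu ∧ Z ⊂ (X₂ : Set Ordinal)} ∪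
        {(X₁ : Set Ordinal), (X₂ : Set Ordinal)}) :
    (X₁ : Set Ordinal) ⊂ (V : Set Ordinal) ∧ (X₂ : Set Ordinal) ⊂ (V : Set Ordinal) := by
  constructor
  · have h1 : (X₁ : Set Ordinal) ∈ {Z | Z ∈ M.mu ∧ Z ⊂ (V : Set Ordinal)} := by
      rw [hfam]
      exact Or.inr (Set.mem_insert _ _)
    exact h1.2
  · have h2 : (X₂ : Set Ordinal) ∈ {Z | Z ∈ M.mu ∧ Z ⊂ (V : Set Ordinal)} := by
      rw [hfam]
      exact Or.inr (Set.mem_insert_of_mem _ rfl)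
    exact h2.2

theorem star_sub {V X₁ X₂ : M.mu}
    (hfam : {Z | Z ∈ M.mu ∧ Z ⊂ (V : Set Ordinal)} =
      {Z | Z ∈ M.mu ∧ Z ⊂ (X₁ : Set Ordinal)} ∪ {Z | Z ∈ M.mu ∧ Z ⊂ (X₂ : Set Ordinal)} ∪
        {(X₁ : Set Ordinal), (X₂ : Set Ordinal)})
    {Z : Set Ordinal} (hZ : Z ∈ M.mu) (hZV : Z ⊂ (V : Set Ordinal)) :
    Z ⊆ (X₁ : Set Ordinal) ∨ Z ⊆ (X₂ : Set Ordinal) := by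
  have hmem : Z ∈ {Z | Z ∈ M.mu ∧ Z ⊂ (X₁ : Set Ordinal)} ∪
      {Z | Z ∈ M.mu ∧ Z ⊂ (X₂ : Set Ordinal)} ∪
      {(X₁ : Set Ordinal), (X₂ : Set Ordinal)} := by
    rw [← hfam]
    exact ⟨hZ, hZV⟩
  rcases hmem with (h | h) | h
  · exact Or.inl h.2.subset
  · exact Or.inr h.2.subset
  · rcases h with h | h
    · exact Or.inl (le_of_eq h)
    · exact Or.inr (le_of_eq h)

/-- Elements of `V₁` and of `V₂` below a common element agree (the common part is an initial
segment of both). -/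
theorem star_trace {V₁ V₂ V : M.mu} (hst : IsStar (V₁ : Set Ordinal) (V₂ : Set Ordinal)
      (V : Set Ordinal))
    {d₁ : Ordinal} (hd₁ : d₁ ∈ (V₁ : Set Ordinal) \ (V₂ : Set Ordinal))
    {α : Ordinal} (hα₁ : α ∈ (V₁ : Set Ordinal)) (hα₂ : α ∈ (V₂ : Set Ordinal)) :
    (V₁ : Set Ordinal) ∩ Set.Iio α = (V₂ : Set Ordinal) ∩ Set.Iio α := by
  obtain ⟨-, -, hC1, h12⟩ := hst
  ext x
  constructor
  · rintro ⟨hx1, hxα⟩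
    refine ⟨?_, hxα⟩
    by_contra hx2
    exact absurd (hC1 α ⟨hα₁, hα₂⟩ x ⟨hx1, hx2⟩) (not_lt.2 (le_of_lt hxα))
  · rintro ⟨hx2, hxα⟩
    refine ⟨?_, hxα⟩
    by_contra hx1
    have h1 : d₁ < x := h12 d₁ hd₁ x ⟨hx2, hx1⟩
    have h2 : α < d₁ := hC1 α ⟨hα₁, hα₂⟩ d₁ hd₁
    exact absurd (lt_trans h2 h1) (not_lt.2 (le_of_lt hxα))

theorem gap_free {Y : M.mu} {α : Ordinal} (hα : α ∈ (Y : Set Ordinal)) {t : Ordinal.{1}}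
    (ht : t < M.wf.rank Y) :
    ∃ Z : M.mu, α ∈ (Z : Set Ordinal) ∧ (Z : Set Ordinal) ⊂ (Y : Set Ordinal) ∧
      t ≤ M.wf.rank Z := by
  obtain ⟨⟨W, hWY⟩, htW⟩ : ∃ b : {b : M.mu // (b : Set Ordinal) ⊂ (Y : Set Ordinal)},
      t < Order.succ (M.wf.rank b.1) := by
    by_contra hcon
    push_neg at hcon
    have : M.wf.rank Y ≤ t := by
      rw [M.wf.rank_eq]
      exact ciSup_le' hcon
    exact absurd ht (not_lt.2 this)
  have htW' : t ≤ M.wf.rank W := Order.lt_succ_iff.1 htW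
  have hY0 : M.wf.rank Y ≠ 0 := by
    intro h0
    rw [h0] at ht
    exact absurd ht (not_lt.2 (zero_le (a := t)))
  have hαU : α ∈ ⋃₀ {Z | Z ∈ M.mu ∧ Z ⊂ (Y : Set Ordinal)} := (M.neat Y hY0) ▸ hα
  obtain ⟨Z', ⟨hZ'mu, hZ'Y⟩, hαZ'⟩ := hαU
  rcases M.locAlmostDirected Y with hdir | ⟨X₁, X₂, hr12, hst, hfam⟩
  · obtain ⟨U, hUmu, hUY, hZ'U, hWU⟩ := hdir Z' hZ'mu (W : Set Ordinal) W.2 hZ'Y hWY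
    refine ⟨⟨U, hUmu⟩, hZ'U hαZ', hUY, le_trans htW' (M.wrank_le hWU)⟩
  · have hsub := M.star_sub hfam W.2 hWY
    have hrW : M.wf.rank W ≤ M.wf.rank X₁ := by
      rcases hsub with h | h
      · exact M.wrank_le h
      · exact le_of_le_of_eq (M.wrank_le h) hr12.symm
    have hαor : α ∈ (X₁ : Set Ordinal) ∪ (X₂ : Set Ordinal) := hst.2.1 ▸ hα
    rcases hαor with hα1 | hα2
    · exact ⟨X₁, hα1, (M.star_proper hfam).1, le_trans htW' hrW⟩
    · exact ⟨X₂, hα2, (M.star_proper hfam).2, le_trans htW' (le_of_le_of_eq hrW hr12)⟩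

theorem exists_same_rank_subset :
    ∀ Y : M.mu, ∀ X : M.mu, ∀ α : Ordinal, α ∈ (X : Set Ordinal) → α ∈ (Y : Set Ordinal) →
    M.wf.rank X ≤ M.wf.rank Y →
    ∃ Z : M.mu, (Z : Set Ordinal) ⊆ (Y : Set Ordinal) ∧ α ∈ (Z : Set Ordinal) ∧
      M.wf.rank Z = M.wf.rank X := by
  intro Y₀
  refine M.wf.induction (C := fun Y => ∀ X : M.mu, ∀ α : Ordinal,
    α ∈ (X : Set Ordinal) → α ∈ (Y : Set Ordinal) → M.wf.rank X ≤ M.wf.rank Y →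
    ∃ Z : M.mu, (Z : Set Ordinal) ⊆ (Y : Set Ordinal) ∧ α ∈ (Z : Set Ordinal) ∧
      M.wf.rank Z = M.wf.rank X) Y₀ ?_
  clear Y₀
  intro Y IH X α hαX hαY hr
  rcases eq_or_lt_of_le hr with heq | hlt
  · exact ⟨Y, subset_rfl, hαY, heq.symm⟩
  · obtain ⟨Z', hαZ', hZ'Y, hrZ'⟩ := M.gap_free hαY hlt
    obtain ⟨Z, hZZ', hαZ, hrZ⟩ := IH Z' hZ'Y X α hαX hαZ' hrZ'
    exact ⟨Z, hZZ'.trans hZ'Y.subset, hαZ, hrZ⟩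

end Star

section TraceEq
set_option linter.deprecated false

theorem trace_aux :
    ∀ V : M.mu, ∀ X Y : M.mu, (X : Set Ordinal) ⊆ (V : Set Ordinal) →
    (Y : Set Ordinal) ⊆ (V : Set Ordinal) →
    M.wf.rank X = M.wf.rank Y → ∀ α : Ordinal, α ∈ (X : Set Ordinal) →
    α ∈ (Y : Set Ordinal) →
    (X : Set Ordinal) ∩ Set.Iio α = (Y : Set Ordinal) ∩ Set.Iio α := by
  intro V₀
  refine M.wf.induction (C := fun V => ∀ X Y : M.mu,
    (X : Set Ordinal) ⊆ (V : Set Ordinal) → (Y : Set Ordinal) ⊆ (V : Set Ordinal) →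
    M.wf.rank X = M.wf.rank Y → ∀ α : Ordinal, α ∈ (X : Set Ordinal) →
    α ∈ (Y : Set Ordinal) →
    (X : Set Ordinal) ∩ Set.Iio α = (Y : Set Ordinal) ∩ Set.Iio α) V₀ ?_
  clear V₀
  intro V IH X Y hXV hYV hr α hαX hαY
  rcases eq_or_ne (X : Set Ordinal) (Y : Set Ordinal) with hXY | hXY
  · rw [hXY]
  rcases eq_or_ne (X : Set Ordinal) (V : Set Ordinal) with hXV' | hXV'
  · have hXeq : X = V := Subtype.ext hXV'
    have hrVY : M.wf.rank V ≤ M.wf.rank Y := by rw [← hXeq, hr]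
    have hYeq : Y = V := M.eq_of_subset_of_wrank_le hYV hrVY
    exact absurd (by rw [hXeq, hYeq] : (X : Set Ordinal) = (Y : Set Ordinal)) hXY
  rcases eq_or_ne (Y : Set Ordinal) (V : Set Ordinal) with hYV' | hYV'
  · have hYeq : Y = V := Subtype.ext hYV'
    have hrVX : M.wf.rank V ≤ M.wf.rank X := by rw [← hYeq, ← hr]
    have hXeq : X = V := M.eq_of_subset_of_wrank_le hXV hrVX
    exact absurd (by rw [hXeq, hYeq] : (X : Set Ordinal) = (Y : Set Ordinal)) hXY
  have hXpr : (X : Set Ordinal) ⊂ (V : Set Ordinal) := ssubset_of_subset_of_ne hXV hXV'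
  have hYpr : (Y : Set Ordinal) ⊂ (V : Set Ordinal) := ssubset_of_subset_of_ne hYV hYV'
  rcases M.locAlmostDirected V with hdir | ⟨V₁, V₂, hr12, hst, hfam⟩
  · obtain ⟨W, hWmu, hWV, hXW, hYW⟩ :=
      hdir (X : Set Ordinal) X.2 (Y : Set Ordinal) Y.2 hXpr hYpr
    exact IH ⟨W, hWmu⟩ hWV X Y hXW hYW hr α hαX hαY
  · have hV₁V := (M.star_proper hfam).1
    have hV₂V := (M.star_proper hfam).2
    have key : ∀ P Q : M.mu, M.wf.rank P = M.wf.rank Q → ∀ A B : M.mu,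
        M.wf.rank A = M.wf.rank B →
        (∀ c : Ordinal, c ∈ (A : Set Ordinal) → c ∈ (B : Set Ordinal) →
          (A : Set Ordinal) ∩ Set.Iio c = (B : Set Ordinal) ∩ Set.Iio c) →
        (A : Set Ordinal) ⊂ (V : Set Ordinal) → (B : Set Ordinal) ⊂ (V : Set Ordinal) →
        (P : Set Ordinal) ⊆ (A : Set Ordinal) → (Q : Set Ordinal) ⊆ (B : Set Ordinal) →
        α ∈ (P : Set Ordinal) → α ∈ (Q : Set Ordinal) →
        (P : Set Ordinal) ∩ Set.Iio α = (Q : Set Ordinal) ∩ Set.Iio α := by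
      intro P Q hPQ A B hrAB htr hAV hBV hPA hQB hαP hαQ
      haveI := M.small_mem A
      haveI := M.small_mem B
      have hotpAB : otp (A : Set Ordinal) = otp (B : Set Ordinal) := M.homog_otp hrAB
      have hαA : α ∈ (A : Set Ordinal) := hPA hαP
      have hαB : α ∈ (B : Set Ordinal) := hQB hαQ
      rcases eq_or_ne (P : Set Ordinal) (A : Set Ordinal) with hPA' | hPA'
      · have hPeq : P = A := Subtype.ext hPA'
        have hrBQ : M.wf.rank B ≤ M.wf.rank Q := by rw [← hrAB, ← hPeq, hPQ]
        have hQeq : Q = B := M.eq_of_subset_of_wrank_le hQB hrBQ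
        rw [hPA', (congrArg Subtype.val hQeq : (Q : Set Ordinal) = (B : Set Ordinal))]
        exact htr α hαA hαB
      rcases eq_or_ne (Q : Set Ordinal) (B : Set Ordinal) with hQB' | hQB'
      · have hQeq : Q = B := Subtype.ext hQB'
        have hrAP : M.wf.rank A ≤ M.wf.rank P := by rw [hrAB, ← hQeq, ← hPQ]
        have hPeq : P = A := M.eq_of_subset_of_wrank_le hPA hrAP
        exact absurd (congrArg Subtype.val hPeq) hPA'
      have hPpr : (P : Set Ordinal) ⊂ (A : Set Ordinal) := ssubset_of_subset_of_ne hPA hPA'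
      have hQpr : (Q : Set Ordinal) ⊂ (B : Set Ordinal) := ssubset_of_subset_of_ne hQB hQB'
      obtain ⟨X', ⟨hX'mu, hX'A⟩, hX'img⟩ := M.homog_surj hrAB ⟨Q.2, hQpr⟩
      have hrQX' : M.wf.rank Q = M.wf.rank (⟨X', hX'mu⟩ : M.mu) :=
        M.homog_rank_image hrAB ⟨X', hX'mu⟩ hX'A Q hX'img.symm
      set f := omap (A : Set Ordinal) (B : Set Ordinal) with hf
      have hfix : ∀ c : Ordinal, c ∈ (A : Set Ordinal) → c ∈ (B : Set Ordinal) → f c = c :=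
        fun c hcA hcB => omap_fix hotpAB hcA hcB (htr c hcA hcB)
      have hinj := M.homog_injOn hrAB
      have hαX' : α ∈ X' := by
        obtain ⟨β, hβX', hβα⟩ : α ∈ f '' X' := hX'img ▸ hαQ
        have hβA : β ∈ (A : Set Ordinal) := hX'A.subset hβX'
        have : β = α := hinj hβA hαA (hβα.trans (hfix α hαA hαB).symm)
        exact this ▸ hβX'
      have htrPX' : (P : Set Ordinal) ∩ Set.Iio α = X' ∩ Set.Iio α :=
        IH A hAV P ⟨X', hX'mu⟩ hPA hX'A.subset (hPQ.trans hrQX') α hαP hαX'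
      have htrQX' : (Q : Set Ordinal) ∩ Set.Iio α = X' ∩ Set.Iio α := by
        ext y
        constructor
        · rintro ⟨hyQ, hyα⟩
          obtain ⟨x, hxX', hxy⟩ : y ∈ f '' X' := hX'img ▸ hyQ
          have hyB : y ∈ (B : Set Ordinal) := hQB hyQ
          have hyA : y ∈ (A : Set Ordinal) := by
            have := htr α hαA hαB
            have hmem : y ∈ (B : Set Ordinal) ∩ Set.Iio α := ⟨hyB, hyα⟩
            rw [← this] at hmem
            exact hmem.1
          have hxA : x ∈ (A : Set Ordinal) := hX'A.subset hxX'
          have : x = y := hinj hxA hyA (hxy.trans (hfix y hyA hyB).symm)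
          exact ⟨this ▸ hxX', hyα⟩
        · rintro ⟨hyX', hyα⟩
          have hyA : y ∈ (A : Set Ordinal) := hX'A.subset hyX'
          have hyB : y ∈ (B : Set Ordinal) := by
            have := htr α hαA hαB
            have hmem : y ∈ (A : Set Ordinal) ∩ Set.Iio α := ⟨hyA, hyα⟩
            rw [this] at hmem
            exact hmem.1
          have : f y = y := hfix y hyA hyB
          refine ⟨?_, hyα⟩
          rw [← hX'img]
          exact ⟨y, hyX', this⟩
      rw [htrPX', htrQX']
    have hsubX := M.star_sub hfam X.2 hXpr
    have hsubY := M.star_sub hfam Y.2 hYpr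
    rcases hsubX with hX1 | hX2
    · rcases hsubY with hY1 | hY2
      · exact IH V₁ hV₁V X Y hX1 hY1 hr α hαX hαY
      · rcases Set.eq_empty_or_nonempty ((V₁ : Set Ordinal) \ (V₂ : Set Ordinal)) with hemp | ⟨d₁, hd₁⟩
        · have hV₁₂ : (V₁ : Set Ordinal) ⊆ (V₂ : Set Ordinal) := Set.diff_eq_empty.1 hemp
          exact IH V₂ hV₂V X Y (hX1.trans hV₁₂) hY2 hr α hαX hαY
        · exact key X Y hr V₁ V₂ hr12
            (fun c h1 h2 => M.star_trace hst hd₁ h1 h2) hV₁V hV₂V hX1 hY2 hαX hαY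
    · rcases hsubY with hY1 | hY2
      · rcases Set.eq_empty_or_nonempty ((V₁ : Set Ordinal) \ (V₂ : Set Ordinal)) with hemp | ⟨d₁, hd₁⟩
        · have hV₁₂ : (V₁ : Set Ordinal) ⊆ (V₂ : Set Ordinal) := Set.diff_eq_empty.1 hemp
          exact IH V₂ hV₂V X Y hX2 (hY1.trans hV₁₂) hr α hαX hαY
        · exact (key Y X hr.symm V₁ V₂ hr12
            (fun c h1 h2 => M.star_trace hst hd₁ h1 h2) hV₁V hV₂V hY1 hX2 hαY hαX).symm
      · exact IH V₂ hV₂V X Y hX2 hY2 hr α hαX hαY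

theorem trace_eq {X Y : M.mu} (hr : M.wf.rank X = M.wf.rank Y) {α : Ordinal}
    (hαX : α ∈ (X : Set Ordinal)) (hαY : α ∈ (Y : Set Ordinal)) :
    (X : Set Ordinal) ∩ Set.Iio α = (Y : Set Ordinal) ∩ Set.Iio α := by
  obtain ⟨W, hWmu, hXW, hYW⟩ := M.directed (X : Set Ordinal) X.2 (Y : Set Ordinal) Y.2
  exact M.trace_aux ⟨W, hWmu⟩ X Y hXW hYW hr α hαX hαY

theorem trace_mono {X Y : M.mu} (hr : M.wf.rank X ≤ M.wf.rank Y) {α : Ordinal}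
    (hαX : α ∈ (X : Set Ordinal)) (hαY : α ∈ (Y : Set Ordinal)) :
    (X : Set Ordinal) ∩ Set.Iio α ⊆ (Y : Set Ordinal) ∩ Set.Iio α := by
  obtain ⟨Z, hZY, hαZ, hrZ⟩ := M.exists_same_rank_subset Y X α hαX hαY hr
  rw [← M.trace_eq hrZ hαZ hαX]
  intro x hx
  exact ⟨hZY hx.1, hx.2⟩

end TraceEq

section Main
set_option linter.deprecated false

theorem mem_of_rank_ge {X Z : M.mu} {δ ε : Ordinal} (hδε : δ < ε)
    (hδX : δ ∈ (X : Set Ordinal)) (hεX : ε ∈ (X : Set Ordinal))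
    (hεZ : ε ∈ (Z : Set Ordinal)) (hr : M.wf.rank X ≤ M.wf.rank Z) :
    δ ∈ (Z : Set Ordinal) := by
  obtain ⟨W, hWZ, hεW, hrW⟩ := M.exists_same_rank_subset Z X ε hεX hεZ hr
  have htr := M.trace_eq hrW.symm hεX hεW
  have : δ ∈ (W : Set Ordinal) ∩ Set.Iio ε := htr ▸ (⟨hδX, hδε⟩ :
    δ ∈ (X : Set Ordinal) ∩ Set.Iio ε)
  exact hWZ this.1

theorem main_aux (δ : Ordinal) (hδlim : Order.IsSuccLimit δ) :
    ∀ r : Ordinal.{0}, ∀ ε : Ordinal, δ < ε → ε < (Order.succ κ).ord → M.mcol δ ε = r →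
    ∃ ζ < δ, ∀ ξ : Ordinal, ζ ≤ ξ → ξ < δ → M.mcol ξ δ ≤ M.mcol ξ ε := by
  intro r
  induction r using Ordinal.induction with
  | h r IH =>
  intro ε hδε hε hr
  have hδκ : δ < (Order.succ κ).ord := hδε.trans hε
  obtain ⟨X, hXr, hδX, hεX⟩ := M.mcol_witness hδκ hε
  have hmin : ∀ Z : M.mu, δ ∈ (Z : Set Ordinal) → ε ∈ (Z : Set Ordinal) →
      M.wf.rank X ≤ M.wf.rank Z := by
    intro Z h1 h2
    refine M.rank_le_iff.1 ?_
    rw [hXr]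
    exact M.mcol_le Z h1 h2
  have claim1k : ∀ ξ : Ordinal, ξ < δ → M.mcol δ ε ≤ M.mcol ξ ε →
      M.mcol ξ δ ≤ M.mcol ξ ε := by
    intro ξ hξδ hge
    obtain ⟨Z, hZr, hξZ, hεZ⟩ := M.mcol_witness (lt_trans hξδ hδκ) hε
    have hrankXZ : M.wf.rank X ≤ M.wf.rank Z := by
      refine M.rank_le_iff.1 ?_
      rw [hXr, hZr]
      exact hge
    have hδZ : δ ∈ (Z : Set Ordinal) := M.mem_of_rank_ge hδε hδX hεX hεZ hrankXZ
    calc M.mcol ξ δ ≤ M.rank Z := M.mcol_le Z hξZ hδZ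
    _ = M.mcol ξ ε := hZr
  by_cases hX0 : M.wf.rank X = 0
  · refine ⟨0, hδlim.pos, fun ξ _ hξδ => claim1k ξ hξδ ?_⟩
    have : M.rank X = 0 := by
      have hl := M.lift_rank X
      rw [hX0, ← Ordinal.lift_zero.{0,1}] at hl
      exact Ordinal.lift_inj.1 hl
    rw [← hXr, this]
    exact zero_le
  rcases M.locAlmostDirected X with hdir | ⟨X₁, X₂, hr12, hst, hfam⟩
  · exfalso
    have hneat := M.neat X hX0
    have hδU : δ ∈ ⋃₀ {Z | Z ∈ M.mu ∧ Z ⊂ (X : Set Ordinal)} := hneat ▸ hδX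
    have hεU : ε ∈ ⋃₀ {Z | Z ∈ M.mu ∧ Z ⊂ (X : Set Ordinal)} := hneat ▸ hεX
    obtain ⟨Y₁, ⟨hY₁mu, hY₁X⟩, hδY₁⟩ := hδU
    obtain ⟨Y₂, ⟨hY₂mu, hY₂X⟩, hεY₂⟩ := hεU
    obtain ⟨U, hUmu, hUX, hY₁U, hY₂U⟩ := hdir Y₁ hY₁mu Y₂ hY₂mu hY₁X hY₂X
    exact absurd (hmin ⟨U, hUmu⟩ (hY₁U hδY₁) (hY₂U hεY₂))
      (not_le.2 (M.wrank_lt hUX))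
  · have hX₁X := (M.star_proper hfam).1
    have hX₂X := (M.star_proper hfam).2
    have hnotboth : ∀ W : M.mu, (W : Set Ordinal) ⊂ (X : Set Ordinal) →
        ¬(δ ∈ (W : Set Ordinal) ∧ ε ∈ (W : Set Ordinal)) := by
      rintro W hWX ⟨h1, h2⟩
      exact absurd (hmin W h1 h2) (not_le.2 (M.wrank_lt hWX))
    have hδmem : δ ∈ (X₁ : Set Ordinal) ∪ (X₂ : Set Ordinal) := hst.2.1 ▸ hδX
    have hεmem : ε ∈ (X₁ : Set Ordinal) ∪ (X₂ : Set Ordinal) := hst.2.1 ▸ hεX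
    -- placement: δ ∈ X₁ \ X₂, ε ∈ X₂ \ X₁
    have hplace : δ ∈ (X₁ : Set Ordinal) \ (X₂ : Set Ordinal) ∧
        ε ∈ (X₂ : Set Ordinal) \ (X₁ : Set Ordinal) := by
      have hδn : ¬(δ ∈ (X₁ : Set Ordinal) ∧ δ ∈ (X₂ : Set Ordinal)) := by
        rintro ⟨h1, h2⟩
        rcases hεmem with h | h
        · exact hnotboth X₁ hX₁X ⟨h1, h⟩
        · exact hnotboth X₂ hX₂X ⟨h2, h⟩
      have hεn : ¬(ε ∈ (X₁ : Set Ordinal) ∧ ε ∈ (X₂ : Set Ordinal)) := by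
        rintro ⟨h1, h2⟩
        rcases hδmem with h | h
        · exact hnotboth X₁ hX₁X ⟨h, h1⟩
        · exact hnotboth X₂ hX₂X ⟨h, h2⟩
      rcases hδmem with hδ | hδ <;> rcases hεmem with hε' | hε'
      · exact absurd (⟨hδ, hε'⟩ : δ ∈ (X₁ : Set Ordinal) ∧ ε ∈ (X₁ : Set Ordinal))
          (hnotboth X₁ hX₁X)
      · have hδ2 : δ ∉ (X₂ : Set Ordinal) := fun h => hδn ⟨hδ, h⟩
        have hε1 : ε ∉ (X₁ : Set Ordinal) := fun h => hεn ⟨h, hε'⟩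
        exact ⟨⟨hδ, hδ2⟩, hε', hε1⟩
      · have hδ1 : δ ∉ (X₁ : Set Ordinal) := fun h => hδn ⟨h, hδ⟩
        have hε2 : ε ∉ (X₂ : Set Ordinal) := fun h => hεn ⟨hε', h⟩
        exact absurd hδε (not_lt.2 (le_of_lt (hst.2.2.2 ε ⟨hε', hε2⟩ δ ⟨hδ, hδ1⟩)))
      · exact absurd (⟨hδ, hε'⟩ : δ ∈ (X₂ : Set Ordinal) ∧ ε ∈ (X₂ : Set Ordinal))
          (hnotboth X₂ hX₂X)
    obtain ⟨hδ1, hε2⟩ := hplace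
    -- any low-rank witness for (ξ, ε) with ξ < δ transfers into X₂ with ξ in the common part
    have getW : ∀ ξ : Ordinal, ξ < δ → M.mcol ξ ε < M.mcol δ ε →
        ∃ W : M.mu, (W : Set Ordinal) ⊆ (X₂ : Set Ordinal) ∧ ξ ∈ (W : Set Ordinal) ∧
          ε ∈ (W : Set Ordinal) ∧ M.rank W = M.mcol ξ ε ∧
          ξ ∈ (X₁ : Set Ordinal) ∧ ξ ∈ (X₂ : Set Ordinal) := by
      intro ξ hξδ hlt
      obtain ⟨Z, hZr, hξZ, hεZ⟩ := M.mcol_witness (lt_trans hξδ hδκ) hε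
      have hrZX : M.wf.rank Z < M.wf.rank X := by
        refine M.rank_lt_iff.1 ?_
        rw [hXr, hZr]
        exact hlt
      obtain ⟨W, hWX, hεW, hrW⟩ := M.exists_same_rank_subset X Z ε hεZ hεX (le_of_lt hrZX)
      have hξW : ξ ∈ (W : Set Ordinal) := by
        have htr := M.trace_eq hrW.symm hεZ hεW
        have : ξ ∈ (W : Set Ordinal) ∩ Set.Iio ε :=
          htr ▸ (⟨hξZ, lt_trans hξδ hδε⟩ : ξ ∈ (Z : Set Ordinal) ∩ Set.Iio ε)
        exact this.1
      have hWpr : (W : Set Ordinal) ⊂ (X : Set Ordinal) := by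
        refine ssubset_of_subset_of_ne hWX ?_
        intro he
        rw [← hrW] at hrZX
        exact absurd (congrArg M.wf.rank (Subtype.ext he)) (ne_of_lt hrZX)
      have hW2 : (W : Set Ordinal) ⊆ (X₂ : Set Ordinal) := by
        rcases M.star_sub hfam W.2 hWpr with h | h
        · exact absurd (h hεW) hε2.2
        · exact h
      have hξ2 : ξ ∈ (X₂ : Set Ordinal) := hW2 hξW
      have hξ1 : ξ ∈ (X₁ : Set Ordinal) := by
        by_contra hξ1
        exact absurd (hst.2.2.2 δ hδ1 ξ ⟨hξ2, hξ1⟩) (not_lt.2 (le_of_lt hξδ))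
      have hWr' : M.rank W = M.mcol ξ ε := by
        rw [← hZr]
        exact M.rank_eq_iff.2 hrW
      exact ⟨W, hW2, hξW, hεW, hWr', hξ1, hξ2⟩
    by_cases hη : ∃ η ∈ (X₁ : Set Ordinal) \ (X₂ : Set Ordinal), η < δ
    · obtain ⟨η, hηmem, hηδ⟩ := hη
      refine ⟨η, hηδ, ?_⟩
      intro ξ hζξ hξδ
      by_cases hge : M.mcol δ ε ≤ M.mcol ξ ε
      · exact claim1k ξ hξδ hge
      · exfalso
        obtain ⟨W, hW2, hξW, hεW, hWr', hξ1, hξ2⟩ := getW ξ hξδ (not_le.1 hge)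
        exact absurd (hst.2.2.1 ξ ⟨hξ1, hξ2⟩ η hηmem) (not_lt.2 hζξ)
    · push_neg at hη
      haveI := M.small_mem X₁
      haveI := M.small_mem X₂
      have hotp21 : otp (X₂ : Set Ordinal) = otp (X₁ : Set Ordinal) := hst.1.symm
      set g := omap (X₂ : Set Ordinal) (X₁ : Set Ordinal) with hg
      have hfix : ∀ c : Ordinal, c ∈ (X₂ : Set Ordinal) → c ∈ (X₁ : Set Ordinal) →
          g c = c := by
        intro c h2 h1
        exact omap_fix hotp21 h2 h1 (M.star_trace hst hδ1 h1 h2).symm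
      have hεb1 : g ε ∈ (X₁ : Set Ordinal) := omap_mem hotp21 hε2.1
      have hεb2 : g ε ∉ (X₂ : Set Ordinal) := by
        intro h2
        have h3 : g (g ε) = g ε := hfix (g ε) h2 hεb1
        have : ε = g ε := omap_inj hotp21 hε2.1 h2 h3.symm
        exact hε2.2 (this ▸ hεb1)
      have hδle : δ ≤ g ε := hη (g ε) ⟨hεb1, hεb2⟩
      obtain ⟨ζ, hζδ, hIH⟩ : ∃ ζ < δ, ∀ ξ : Ordinal, ζ ≤ ξ → ξ < δ →
          M.mcol ξ δ ≤ M.mcol ξ (g ε) := by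
        rcases eq_or_lt_of_le hδle with heq | hlt
        · exact ⟨0, hδlim.pos, fun ξ _ _ => le_of_eq (by rw [← heq])⟩
        · have hcol_lt : M.mcol δ (g ε) < r := by
            have h1 : M.mcol δ (g ε) ≤ M.rank X₁ := M.mcol_le X₁ hδ1.1 hεb1
            have h2 : M.rank X₁ < M.rank X := M.rank_lt_iff.2 (M.wrank_lt hX₁X)
            rw [← hr, ← hXr]
            exact lt_of_le_of_lt h1 h2
          exact IH _ hcol_lt (g ε) hlt (M.mem_sub X₁.1 X₁.2 hεb1) rfl
      refine ⟨ζ, hζδ, ?_⟩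
      intro ξ hζξ hξδ
      by_cases hge : M.mcol δ ε ≤ M.mcol ξ ε
      · exact claim1k ξ hξδ hge
      · obtain ⟨W, hW2, hξW, hεW, hWr', hξ1, hξ2⟩ := getW ξ hξδ (not_le.1 hge)
        have hξfix : g ξ = ξ := hfix ξ hξ2 hξ1
        have htrans : M.mcol ξ (g ε) ≤ M.mcol ξ ε := by
          by_cases hWX₂ : (W : Set Ordinal) = (X₂ : Set Ordinal)
          · have hW2eq : W = X₂ := Subtype.ext hWX₂
            have hrk : M.rank X₁ = M.rank W := M.rank_eq_iff.2 (by rw [hW2eq]; exact hr12)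
            calc M.mcol ξ (g ε) ≤ M.rank X₁ := M.mcol_le X₁ hξ1 hεb1
            _ = M.rank W := hrk
            _ = M.mcol ξ ε := hWr'
          · have hWpr2 : (W : Set Ordinal) ⊂ (X₂ : Set Ordinal) :=
              ssubset_of_subset_of_ne hW2 hWX₂
            have himg := M.homog_image_mem hr12.symm ⟨W.2, hWpr2⟩
            set W' : M.mu := ⟨g '' (W : Set Ordinal), himg.1⟩ with hW'def
            have hrkW' : M.wf.rank W' = M.wf.rank W :=
              M.homog_rank_image hr12.symm W hWpr2 W' rfl
            have hξW' : ξ ∈ (W' : Set Ordinal) := ⟨ξ, hξW, hξfix⟩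
            have hεW' : g ε ∈ (W' : Set Ordinal) := ⟨ε, hεW, rfl⟩
            calc M.mcol ξ (g ε) ≤ M.rank W' := M.mcol_le W' hξW' hεW'
            _ = M.rank W := M.rank_eq_iff.2 hrkW'
            _ = M.mcol ξ ε := hWr'
        exact le_trans (hIH ξ hζξ hξδ) htrans

end Main

end TwoCardinal

/-- Coherence of the μ-coloring at limits: for limit `δ` and `δ < ε < κ⁺` there is `ζ < δ`
with `m(ξ,ε) ≥ m(ξ,δ)` for all `ζ ≤ ξ < δ`. -/
theorem mcol_limit_coherence (κ : Cardinal) (hκ : κ.IsRegular) (M : TwoCardinal κ)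
    (δ ε : Ordinal) (hδlim : Order.IsSuccLimit δ) (hδε : δ < ε) (hε : ε < (Order.succ κ).ord) :
    ∃ ζ < δ, ∀ ξ : Ordinal, ζ ≤ ξ → ξ < δ → M.mcol ξ δ ≤ M.mcol ξ ε :=
  M.main_aux δ hδlim (M.mcol δ ε) ε hδε hε rfl
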